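/- Let A ∈ ℝ^{n_s×n_s}, B ∈ ℝ^{n_s×n_u}, C ∈ ℝ^{n_o×n_s}. Let π₁ be a residual feed-forward neural network with input dimension n_s and output dimension n_u, and π₂ one with input dimension n_o and output dimension n_s, both with activation σ, σ(0) = 0, sector bounded at every neuron. Consider the K = 2 stacked network acting on 𝐱 = (x₁, x₂) ∈ ℝ^{2n_s} with T₁¹ = [I_{n_s}, I_{n_s}], T₁² = B, T₂¹ = [0, C], T₂² = I_{n_s}, with stacked isolation matrices R̂_π, R̂_ξ and matrices Ψ(2), M(2)(λ) for some λ ∈ ℝ^{n_{σ_1}+n_{σ_2}} with λ ≥ 0. Set Â = diag(A, A) ∈ ℝ^{2n_s×2n_s}. Suppose there exists a symmetric positive definite P̂ ∈ ℝ^{2n_s×2n_s} such that R̂_πᵀ [[ÂᵀP̂ + P̂Â, P̂], [P̂, 0]] R̂_π + R̂_ξᵀ Ψ(2)ᵀ M(2)(λ) Ψ(2) R̂_ξ is negative definite. Then there exist M > 0 and κ > 0 such that all differentiable x, x̂ : [0,∞) → ℝ^{n_s} satisfying ẋ(t) = A x(t) + B π₁(x̂(t)) and x̂′(t) = A x̂(t)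 + B π₁(x̂(t)) + π₂(C(x̂(t) − x(t))) satisfy ‖x(t)‖₂ + ‖x(t) − x̂(t)‖₂ ≤ M e^{−κ t} (‖x(0)‖₂ + ‖x̂(0)‖₂) for all t ≥ 0. -/

import Mathlib

open Matrix

/-- A residual feed-forward neural network with `Lm + 1` hidden layers,
input dimension `n₀`, output dimension `m`.  `hw l` is the width of hidden layer `l+1`
(0-based: hidden layers are indexed `0, …, Lm`).  `W l` is the weight matrix feeding
hidden layer `l`, `Wout` the output weight matrix `W^{L+1}` and `Wskip` the shortcut
connection weight matrix `W^{L+2}`. -/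
structure ResNet (n₀ m : ℕ) where
  Lm : ℕ
  hw : ℕ → ℕ
  W : (l : ℕ) → Matrix (Fin (hw l)) (Fin (if l = 0 then n₀ else hw (l - 1))) ℝ
  Wout : Matrix (Fin m) (Fin (hw Lm)) ℝ
  Wskip : Matrix (Fin m) (Fin n₀) ℝ

namespace ResNet

variable {n₀ m : ℕ}

/-- dimension of layer `l` (`l = 0` is the input layer, `l = 1, …, Lm+1` the hidden layers). -/
def dim (net : ResNet n₀ m) (l : ℕ) : ℕ := if l = 0 then n₀ else net.hw (l - 1)

/-- the forward pass through the hidden layers: `hfun σ net l x` is `h^l(x)`. -/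
def hfun (σ : ℝ → ℝ) (net : ResNet n₀ m) : (l : ℕ) → (Fin n₀ → ℝ) → (Fin (net.dim l) → ℝ)
  | 0, x => x
  | l + 1, x => fun i => σ ((net.W l).mulVec (hfun σ net l x) i)

/-- the output `π(x) = W^{L+1} h^L(x) + W^{L+2} x` of the residual network. -/
def apply (σ : ℝ → ℝ) (net : ResNet n₀ m) (x : Fin n₀ → ℝ) : Fin m → ℝ :=
  net.Wout.mulVec (hfun σ net (net.Lm + 1) x) + net.Wskip.mulVec x

/-- index type for the neurons (all hidden layers stacked). -/
abbrev NIdx (net : ResNet n₀ m) : Type := Σ l : Fin (net.Lm + 1), Fin (net.hw l)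

/-- the first-layer weight matrix `W^1`. -/
def W1 (net : ResNet n₀ m) : Matrix (Fin (net.hw 0)) (Fin n₀) ℝ := net.W 0

/-- the isolation block `N_{πw} = [0 ⋯ 0 W^{L+1}]`. -/
def Npiw (net : ResNet n₀ m) : Matrix (Fin m) net.NIdx ℝ :=
  Matrix.of fun i j =>
    if h : (j.1 : ℕ) = net.Lm then net.Wout i (Fin.cast (congrArg net.hw h) j.2) else 0

/-- the isolation block `N_{ξx} = [(W^1 T)ᵀ 0 ⋯ 0]ᵀ` for an input pre-matrix `T`. -/
def Nxix (net : ResNet n₀ m) {P : Type*} (T : Matrix (Fin n₀) P ℝ) :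
    Matrix net.NIdx P ℝ :=
  Matrix.of fun j i =>
    if h : (j.1 : ℕ) = 0 then (net.W1 * T) (Fin.cast (congrArg net.hw h) j.2) i else 0

/-- the isolation block `N_{ξw}` (block `(l, l-1)` is `W^l`). -/
def Nxiw (net : ResNet n₀ m) : Matrix net.NIdx net.NIdx ℝ :=
  Matrix.of fun i j =>
    if h : (j.1 : ℕ) + 1 = (i.1 : ℕ) then
      net.W i.1 i.2 (Fin.cast (by
        rw [if_neg (by omega : ¬ ((i.1 : ℕ)) = 0)]
        exact congrArg net.hw (by omega)) j.2)
    else 0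

/-- the isolation matrix `R_π = [[I, 0], [N_{πx}, N_{πw}]]` with input pre-matrix `T`. -/
def Rpi (net : ResNet n₀ m) {P : Type*} [DecidableEq P]
    (T : Matrix (Fin n₀) P ℝ) : Matrix (P ⊕ Fin m) (P ⊕ net.NIdx) ℝ :=
  Matrix.fromBlocks 1 0 (net.Wskip * T) net.Npiw

/-- the isolation matrix `R_ξ = [[N_{ξx}, N_{ξw}], [0, I]]` with input pre-matrix `T`. -/
def Rxi (net : ResNet n₀ m) {P : Type*}
    (T : Matrix (Fin n₀) P ℝ) : Matrix (net.NIdx ⊕ net.NIdx) (P ⊕ net.NIdx) ℝ :=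
  Matrix.fromBlocks (net.Nxix T) net.Nxiw 0 1

end ResNet

/-- `Ψ = [[diag β, -I], [-diag α, I]]`. -/
def Psi {I : Type*} [DecidableEq I] (a b : I → ℝ) : Matrix (I ⊕ I) (I ⊕ I) ℝ :=
  Matrix.fromBlocks (Matrix.diagonal b) (-1) (-(Matrix.diagonal a)) 1

/-- `M(λ) = [[0, diag λ], [diag λ, 0]]`. -/
def Mmat {I : Type*} [DecidableEq I] (lam : I → ℝ) : Matrix (I ⊕ I) (I ⊕ I) ℝ :=
  Matrix.fromBlocks 0 (Matrix.diagonal lam) (Matrix.diagonal lam) 0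

/-- a matrix is negative definite if its quadratic form is negative on nonzero vectors. -/
def Matrix.NegDef {I : Type*} [Fintype I] (S : Matrix I I ℝ) : Prop :=
  ∀ x : I → ℝ, x ≠ 0 → x ⬝ᵥ S.mulVec x < 0

/-- the Euclidean norm `‖v‖₂` of a finitely indexed real vector. -/
noncomputable def norm2 {I : Type*} [Fintype I] (v : I → ℝ) : ℝ := Real.sqrt (∑ i, v i ^ 2)

/-- `σ` is sector bounded in `[a, b]`. -/
def SectorBounded (σ : ℝ → ℝ) (a b : ℝ) : Prop := ∀ s : ℝ, 0 ≤ (σ s - a * s) * (b * s - σ s)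

/-- `(C, A)` is an observable pair. -/
def Observable {n p : Type*} [Fintype n] [DecidableEq n]
    (C : Matrix p n ℝ) (A : Matrix n n ℝ) : Prop :=
  ∀ x : n → ℝ, (∀ k : ℕ, (C * A ^ k).mulVec x = 0) → x = 0

/-- a real square matrix is Hurwitz if all its complex eigenvalues have negative real part. -/
def IsHurwitz {n : ℕ} (A : Matrix (Fin n) (Fin n) ℝ) : Prop :=
  ∀ μ ∈ spectrum ℂ (A.map (Complex.ofReal)), μ.re < 0

/-- induced `∞`-norm of a matrix: maximum absolute row sum. -/
noncomputable def rowSumNorm {I J : Type*} [Fintype J] (A : Matrix I J ℝ) : ℝ :=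
  ⨆ i, ∑ j, |A i j|

section Stack2

variable {p : Type*} {n₁ m₁ n₂ m₂ o₁ o₂ : ℕ}

/-- stacked isolation block `N̂_{πx}` for two networks with input pre-matrices `T11, T21`
and output post-matrices `T12, T22`. -/
def Npix2 (net1 : ResNet n₁ m₁) (net2 : ResNet n₂ m₂)
    (T11 : Matrix (Fin n₁) p ℝ) (T21 : Matrix (Fin n₂) p ℝ)
    (T12 : Matrix (Fin o₁) (Fin m₁) ℝ) (T22 : Matrix (Fin o₂) (Fin m₂) ℝ) :
    Matrix (Fin o₁ ⊕ Fin o₂) p ℝ :=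
  Matrix.fromRows (T12 * net1.Wskip * T11) (T22 * net2.Wskip * T21)

/-- stacked isolation block `N̂_{πw}` for two networks. -/
def Npiw2 (net1 : ResNet n₁ m₁) (net2 : ResNet n₂ m₂)
    (T12 : Matrix (Fin o₁) (Fin m₁) ℝ) (T22 : Matrix (Fin o₂) (Fin m₂) ℝ) :
    Matrix (Fin o₁ ⊕ Fin o₂) (net1.NIdx ⊕ net2.NIdx) ℝ :=
  Matrix.fromBlocks (T12 * net1.Npiw) 0 0 (T22 * net2.Npiw)

/-- stacked isolation block `N̂_{ξx}` for two networks. -/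
def Nxix2 (net1 : ResNet n₁ m₁) (net2 : ResNet n₂ m₂)
    (T11 : Matrix (Fin n₁) p ℝ) (T21 : Matrix (Fin n₂) p ℝ) :
    Matrix (net1.NIdx ⊕ net2.NIdx) p ℝ :=
  Matrix.fromRows (net1.Nxix T11) (net2.Nxix T21)

/-- stacked isolation block `N̂_{ξw}` for two networks. -/
def Nxiw2 (net1 : ResNet n₁ m₁) (net2 : ResNet n₂ m₂) :
    Matrix (net1.NIdx ⊕ net2.NIdx) (net1.NIdx ⊕ net2.NIdx) ℝ :=
  Matrix.fromBlocks net1.Nxiw 0 0 net2.Nxiw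

/-- stacked isolation matrix `R̂_π` for two networks. -/
def Rpi2 (net1 : ResNet n₁ m₁) (net2 : ResNet n₂ m₂) [DecidableEq p]
    (T11 : Matrix (Fin n₁) p ℝ) (T21 : Matrix (Fin n₂) p ℝ)
    (T12 : Matrix (Fin o₁) (Fin m₁) ℝ) (T22 : Matrix (Fin o₂) (Fin m₂) ℝ) :
    Matrix (p ⊕ (Fin o₁ ⊕ Fin o₂)) (p ⊕ (net1.NIdx ⊕ net2.NIdx)) ℝ :=
  Matrix.fromBlocks 1 0 (Npix2 net1 net2 T11 T21 T12 T22) (Npiw2 net1 net2 T12 T22)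

/-- stacked isolation matrix `R̂_ξ` for two networks. -/
def Rxi2 (net1 : ResNet n₁ m₁) (net2 : ResNet n₂ m₂)
    (T11 : Matrix (Fin n₁) p ℝ) (T21 : Matrix (Fin n₂) p ℝ) :
    Matrix ((net1.NIdx ⊕ net2.NIdx) ⊕ (net1.NIdx ⊕ net2.NIdx)) (p ⊕ (net1.NIdx ⊕ net2.NIdx)) ℝ :=
  Matrix.fromBlocks (Nxix2 net1 net2 T11 T21) (Nxiw2 net1 net2) 0 1

end Stack2



lemma sum_sq_pos_of_ne_zero {I : Type*} [Fintype I] {z : I → ℝ} (hz : z ≠ 0) :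
    0 < ∑ i, z i ^ 2 := by
  have h : ∃ i, z i ≠ 0 := by
    by_contra h; push_neg at h; exact hz (funext h)
  obtain ⟨i, hi⟩ := h
  have := Finset.sum_le_sum_of_subset_of_nonneg (Finset.subset_univ {i})
    (fun j _ _ => sq_nonneg (z j))
  calc (0:ℝ) < z i ^ 2 := by positivity
    _ = ∑ j ∈ {i}, z j ^ 2 := by simp
    _ ≤ _ := this

lemma exists_quad_bounds {I : Type*} [Fintype I] [Nonempty I] (S : Matrix I I ℝ) :
    ∃ a b : ℝ, (∃ u : I → ℝ, u ≠ 0 ∧ u ⬝ᵥ S.mulVec u = a * ∑ i, u i ^ 2) ∧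
      (∃ v : I → ℝ, v ≠ 0 ∧ v ⬝ᵥ S.mulVec v = b * ∑ i, v i ^ 2) ∧
      ∀ z : I → ℝ, a * ∑ i, z i ^ 2 ≤ z ⬝ᵥ S.mulVec z ∧ z ⬝ᵥ S.mulVec z ≤ b * ∑ i, z i ^ 2 := by
  classical
  set E := EuclideanSpace ℝ I
  have hnormsq : ∀ z : E, ‖z‖ ^ 2 = ∑ i, z i ^ 2 := by
    intro z
    rw [EuclideanSpace.norm_eq]
    rw [Real.sq_sqrt (by positivity)]
    simp [sq_abs]
  let f : E → ℝ := fun z => z ⬝ᵥ S.mulVec z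
  have hf : Continuous f := by
    unfold f
    show Continuous (fun z : EuclideanSpace ℝ I => z.ofLp ⬝ᵥ S *ᵥ z.ofLp)
    have hc := PiLp.continuous_ofLp 2 (fun _ : I => ℝ)
    unfold dotProduct Matrix.mulVec dotProduct
    fun_prop
  have hsne : (Metric.sphere (0:E) 1).Nonempty := by
    refine ⟨EuclideanSpace.single (Classical.arbitrary I) 1, ?_⟩
    rw [mem_sphere_iff_norm, sub_zero, EuclideanSpace.norm_single]; norm_num
  obtain ⟨u, hum, humax⟩ := (isCompact_sphere (0:E) 1).exists_isMinOn hsne hf.continuousOn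
  obtain ⟨v, hvm, hvmax⟩ := (isCompact_sphere (0:E) 1).exists_isMaxOn hsne hf.continuousOn
  have hnu : ‖u‖ = 1 := by simpa using hum
  have hnv : ‖v‖ = 1 := by simpa using hvm
  have hsq : ∀ z : E, ‖z‖ = 1 → ∑ i, z i ^ 2 = 1 := by
    intro z hz; rw [← hnormsq]; rw [hz]; norm_num
  have hscale : ∀ (c : ℝ) (z : I → ℝ), (c • z) ⬝ᵥ S.mulVec (c • z) = c^2 * (z ⬝ᵥ S.mulVec z) := by
    intro c z
    rw [Matrix.mulVec_smul, smul_dotProduct, dotProduct_smul,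
      smul_eq_mul, smul_eq_mul]
    ring
  refine ⟨f u, f v, ⟨u, ?_, by rw [hsq u hnu]; ring⟩, ⟨v, ?_, by rw [hsq v hnv]; ring⟩, ?_⟩
  · intro h; have := hsq u hnu; rw [h] at this; simp at this
  · intro h; have := hsq v hnv; rw [h] at this; simp at this
  · intro z
    by_cases hz : z = 0
    · simp [hz, f]
    · have hzn : (0:ℝ) < ∑ i, z i ^ 2 := sum_sq_pos_of_ne_zero hz
      set r : ℝ := Real.sqrt (∑ i, z i ^ 2) with hr
      have hrpos : 0 < r := Real.sqrt_pos.mpr hzn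
      have hr2 : r ^ 2 = ∑ i, z i ^ 2 := Real.sq_sqrt hzn.le
      set w : E := WithLp.toLp 2 (r⁻¹ • z) with hw
      have hwnorm : ‖w‖ = 1 := by
        have : ‖w‖^2 = 1 := by
          rw [hnormsq]
          have : ∀ i, w i = r⁻¹ * z i := fun i => rfl
          simp only [this, mul_pow, ← Finset.mul_sum]
          rw [← hr2]; field_simp
        nlinarith [norm_nonneg w]
      have hzw : z = r • w.ofLp := by
        rw [hw, WithLp.ofLp_toLp, smul_smul]; field_simp; rw [one_smul]
      have hfz : f (WithLp.toLp 2 z) = r^2 * f w := by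
        unfold f; rw [hzw]; exact hscale r w.ofLp
      have h1 : f u ≤ f w := humax (by simp [hwnorm])
      have h2 : f w ≤ f v := hvmax (by simp [hwnorm])
      constructor
      · show f u * _ ≤ f (WithLp.toLp 2 z)
        rw [hfz, ← hr2]; nlinarith [sq_nonneg r]
      · show f (WithLp.toLp 2 z) ≤ f v * _
        rw [hfz, ← hr2]; nlinarith [sq_nonneg r]

namespace ResNet
variable {n₀ m : ℕ}

/-- the stacked activation vector: `wvec σ net y ⟨l, i⟩ = h^{l+1}(y) i`. -/
noncomputable def wvec (σ : ℝ → ℝ) (net : ResNet n₀ m) (y : Fin n₀ → ℝ) : net.NIdx → ℝ :=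
  fun j => hfun σ net ((j.1 : ℕ) + 1) y (Fin.cast (by simp [dim]) j.2)

lemma sigma_sum_eq (net : ResNet n₀ m) (f : net.NIdx → ℝ) (l : Fin (net.Lm + 1))
    (h0 : ∀ j : net.NIdx, j.1 ≠ l → f j = 0) :
    ∑ j : net.NIdx, f j = ∑ i2 : Fin (net.hw l), f ⟨l, i2⟩ := by
  rw [← Finset.univ_sigma_univ, Finset.sum_sigma]
  rw [Finset.sum_eq_single l]
  · exact fun b _ hb => Finset.sum_eq_zero fun i2 _ => h0 ⟨b, i2⟩ hb
  · exact fun h => absurd (Finset.mem_univ l) h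

lemma apply_eq (σ : ℝ → ℝ) (net : ResNet n₀ m) (y : Fin n₀ → ℝ) :
    net.apply σ y = net.Wskip.mulVec y + net.Npiw.mulVec (wvec σ net y) := by
  funext i
  simp only [apply, Pi.add_apply]
  rw [add_comm]
  congr 1
  show net.Wout.mulVec (hfun σ net (net.Lm + 1) y) i = _
  simp only [Matrix.mulVec, dotProduct]
  rw [sigma_sum_eq net _ (Fin.last net.Lm) (fun j hj => by
      have h2 : (j.1 : ℕ) ≠ net.Lm := fun h => hj (Fin.ext (by simp [h]))
      simp only [Npiw, Matrix.of_apply]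
      rw [dif_neg h2, zero_mul])]
  apply Finset.sum_congr rfl
  intro i2 _
  simp only [Npiw, Matrix.of_apply]
  rw [dif_pos (Fin.val_last _)]
  rfl

lemma wvec_consistent (σ : ℝ → ℝ) (net : ResNet n₀ m) {P : Type*} [Fintype P]
    (T : Matrix (Fin n₀) P ℝ) (z : P → ℝ) (j : net.NIdx) :
    wvec σ net (T.mulVec z) j
      = σ (((net.Nxix T).mulVec z + net.Nxiw.mulVec (wvec σ net (T.mulVec z))) j) := by
  obtain ⟨⟨l, hl⟩, i⟩ := j
  simp only [Pi.add_apply]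
  rcases Nat.eq_zero_or_pos l with h0 | hpos
  · subst h0
    have hxiw : net.Nxiw.mulVec (wvec σ net (T.mulVec z)) ⟨⟨0, hl⟩, i⟩ = 0 := by
      apply Finset.sum_eq_zero
      intro j _
      simp only [Nxiw, Matrix.of_apply]
      rw [dif_neg (by omega), zero_mul]
    rw [hxiw, add_zero]
    have hx : (net.Nxix T).mulVec z ⟨⟨0, hl⟩, i⟩
        = (net.W1 * T).mulVec z (Fin.cast rfl i) := by
      simp only [Matrix.mulVec, dotProduct, Nxix, Matrix.of_apply]
      apply Finset.sum_congr rfl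
      intro p _
      rw [dif_pos trivial]
    rw [hx, ← Matrix.mulVec_mulVec]
    rfl
  · obtain ⟨k, rfl⟩ : ∃ k, l = k + 1 := ⟨l - 1, by omega⟩
    have hxix : (net.Nxix T).mulVec z ⟨⟨k + 1, hl⟩, i⟩ = 0 := by
      apply Finset.sum_eq_zero
      intro p _
      simp only [Nxix, Matrix.of_apply]
      rw [dif_neg (by omega), zero_mul]
    rw [hxix, zero_add]
    have hkx : k < net.Lm + 1 := by omega
    have hw : net.Nxiw.mulVec (wvec σ net (T.mulVec z)) ⟨⟨k + 1, hl⟩, i⟩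
        = ∑ i2 : Fin (net.hw k),
            net.W (k+1) i (Fin.cast (by simp) i2) * wvec σ net (T.mulVec z) ⟨⟨k, hkx⟩, i2⟩ := by
      rw [Matrix.mulVec, dotProduct,
        sigma_sum_eq net _ ⟨k, hkx⟩ (fun j hj => by
          have h2 : ¬ ((j.1 : ℕ) + 1 = k + 1) := fun h =>
            hj (Fin.ext (by simp only [Fin.val_mk]; omega))
          simp only [Nxiw, Matrix.of_apply]
          rw [dif_neg h2, zero_mul])]
      apply Finset.sum_congr rfl
      intro i2 _
      simp only [Nxiw, Matrix.of_apply]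
      rw [dif_pos trivial]
    rw [hw]
    rfl

end ResNet

lemma dot_conj {I J : Type*} [Fintype I] [Fintype J] (R : Matrix I J ℝ) (Q : Matrix I I ℝ)
    (v : J → ℝ) :
    v ⬝ᵥ (Rᵀ * Q * R).mulVec v = (R.mulVec v) ⬝ᵥ Q.mulVec (R.mulVec v) := by
  rw [← Matrix.mulVec_mulVec, ← Matrix.mulVec_mulVec, Matrix.dotProduct_mulVec,
    Matrix.vecMul_transpose]

lemma psi_quad {I : Type*} [Fintype I] [DecidableEq I] (α β lam : I → ℝ)
    (hlam : ∀ i, 0 ≤ lam i) {σ : ℝ → ℝ} (hsec : ∀ i, SectorBounded σ (α i) (β i))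
    (ξ w : I → ℝ) (hw : ∀ i, w i = σ (ξ i)) :
    0 ≤ (Sum.elim ξ w) ⬝ᵥ ((Psi α β)ᵀ * Mmat lam * (Psi α β)).mulVec (Sum.elim ξ w) := by
  rw [dot_conj]
  have hPsi : (Psi α β).mulVec (Sum.elim ξ w)
      = Sum.elim (fun i => β i * ξ i - w i) (fun i => w i - α i * ξ i) := by
    funext i
    cases i with
    | inl i =>
      simp [Psi, Matrix.fromBlocks_mulVec, Matrix.mulVec_diagonal, Matrix.neg_mulVec,
        Matrix.one_mulVec, sub_eq_add_neg]
    | inr i =>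
      simp [Psi, Matrix.fromBlocks_mulVec, Matrix.mulVec_diagonal, Matrix.neg_mulVec,
        Matrix.one_mulVec, sub_eq_add_neg, add_comm]
  rw [hPsi]
  unfold Mmat
  rw [Matrix.fromBlocks_mulVec]
  simp only [Matrix.zero_mulVec, Matrix.mulVec_diagonal, zero_add, add_zero,
    dotProduct, Fintype.sum_sum_type, Sum.elim_inl, Sum.elim_inr, Function.comp]
  apply add_nonneg <;> apply Finset.sum_nonneg <;> intro i _ <;>
    · have h := hsec i (ξ i)
      have h2 := hlam i
      rw [hw i]
      nlinarith

lemma norm2_nonneg {I : Type*} [Fintype I] (v : I → ℝ) : 0 ≤ norm2 v := Real.sqrt_nonneg _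

lemma norm2_sq {I : Type*} [Fintype I] (v : I → ℝ) : norm2 v ^ 2 = ∑ i, v i ^ 2 := by
  rw [norm2, Real.sq_sqrt (by positivity)]

lemma norm2_neg {I : Type*} [Fintype I] (v : I → ℝ) : norm2 (-v) = norm2 v := by
  simp [norm2]

lemma sqrt_add_le' (a b : ℝ) (ha : 0 ≤ a) (hb : 0 ≤ b) :
    Real.sqrt (a + b) ≤ Real.sqrt a + Real.sqrt b := by
  have h := Real.sqrt_le_sqrt (show a + b ≤ (Real.sqrt a + Real.sqrt b) ^ 2 by
    nlinarith [Real.sq_sqrt ha, Real.sq_sqrt hb, Real.sqrt_nonneg a, Real.sqrt_nonneg b])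
  rwa [Real.sqrt_sq (by positivity)] at h

lemma norm2_add_le {I : Type*} [Fintype I] (v w : I → ℝ) :
    norm2 (v + w) ≤ norm2 v + norm2 w := by
  have hcs := Finset.sum_mul_sq_le_sq_mul_sq Finset.univ v w
  have h1 : ∑ i, v i * w i ≤ norm2 v * norm2 w := by
    have h2 : (∑ i, v i * w i) ^ 2 ≤ (norm2 v * norm2 w) ^ 2 := by
      rw [mul_pow, norm2_sq, norm2_sq]; exact hcs
    have h3 : 0 ≤ norm2 v * norm2 w := mul_nonneg (norm2_nonneg v) (norm2_nonneg w)
    nlinarith [abs_nonneg (∑ i, v i * w i), le_abs_self (∑ i, v i * w i)]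
  have h4 := Real.sqrt_le_sqrt (show ∑ i, (v + w) i ^ 2 ≤ (norm2 v + norm2 w) ^ 2 by
    have heq : ∑ i, (v + w) i ^ 2 = (∑ i, v i ^ 2) + 2 * (∑ i, v i * w i) + ∑ i, w i ^ 2 := by
      have : ∀ i, (v + w) i ^ 2 = v i ^ 2 + 2 * (v i * w i) + w i ^ 2 := by
        intro i; simp [Pi.add_apply]; ring
      simp only [this, Finset.sum_add_distrib, Finset.mul_sum]
    rw [heq]
    nlinarith [norm2_sq v, norm2_sq w, norm2_nonneg v, norm2_nonneg w])
  rwa [Real.sqrt_sq (add_nonneg (norm2_nonneg v) (norm2_nonneg w))] at h4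

section Key

variable {ns nu no : ℕ} (A : Matrix (Fin ns) (Fin ns) ℝ) (B : Matrix (Fin ns) (Fin nu) ℝ)
  (C : Matrix (Fin no) (Fin ns) ℝ) (σ : ℝ → ℝ)
  (net1 : ResNet ns nu) (net2 : ResNet no ns)

/-- stacked activations for the closed loop at state `(a, b)`. -/
noncomputable def bigw (a b : Fin ns → ℝ) : (net1.NIdx ⊕ net2.NIdx) → ℝ :=
  Sum.elim (ResNet.wvec σ net1 (a + b)) (ResNet.wvec σ net2 (C.mulVec b))

lemma T11_action (a b : Fin ns → ℝ) :
    (Matrix.fromCols (1 : Matrix (Fin ns) (Fin ns) ℝ) 1).mulVec (Sum.elim a b) = a + b := by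
  rw [Matrix.fromCols_mulVec_sumElim, Matrix.one_mulVec, Matrix.one_mulVec]

lemma T21_action (a b : Fin ns → ℝ) :
    (Matrix.fromCols (0 : Matrix (Fin no) (Fin ns) ℝ) C).mulVec (Sum.elim a b)
      = C.mulVec b := by
  rw [Matrix.fromCols_mulVec_sumElim, Matrix.zero_mulVec, zero_add]

lemma rpi_action (a b : Fin ns → ℝ) :
    (Rpi2 net1 net2 (Matrix.fromCols 1 1) (Matrix.fromCols 0 C) B 1).mulVec
      (Sum.elim (Sum.elim a b) (bigw C σ net1 net2 a b))
    = Sum.elim (Sum.elim a b)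
        (Sum.elim (B.mulVec (net1.apply σ (a + b))) (net2.apply σ (C.mulVec b))) := by
  unfold Rpi2
  rw [Matrix.fromBlocks_mulVec]
  simp only [Sum.elim_comp_inl, Sum.elim_comp_inr]
  rw [Matrix.one_mulVec, Matrix.zero_mulVec, add_zero]
  refine congrArg _ ?_
  · unfold Npix2 Npiw2 bigw
    rw [Matrix.fromRows_mulVec, Matrix.fromBlocks_mulVec]
    simp only [Sum.elim_comp_inl, Sum.elim_comp_inr]
    funext i
    cases i with
    | inl i =>
      show ((B * net1.Wskip * (Matrix.fromCols (1 : Matrix (Fin ns) (Fin ns) ℝ) 1)).mulVec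
          (Sum.elim a b)
        + ((B * net1.Npiw).mulVec (ResNet.wvec σ net1 (a + b))
            + (0 : Matrix (Fin ns) net2.NIdx ℝ).mulVec
            (ResNet.wvec σ net2 (C.mulVec b)))) i = _
      rw [Matrix.zero_mulVec, add_zero, ← Matrix.mulVec_mulVec (N := net1.Npiw),
        Matrix.mul_assoc, ← Matrix.mulVec_mulVec (M := B),
        ← Matrix.mulVec_mulVec (M := net1.Wskip), T11_action,
        ← Matrix.mulVec_add, ← ResNet.apply_eq]
      rfl
    | inr i =>
      show (((1 : Matrix (Fin ns) (Fin ns) ℝ) * net2.Wskip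
            * (Matrix.fromCols (0 : Matrix (Fin no) (Fin ns) ℝ) C)).mulVec (Sum.elim a b)
        + ((0 : Matrix (Fin ns) net1.NIdx ℝ).mulVec (ResNet.wvec σ net1 (a + b))
            + ((1 : Matrix (Fin ns) (Fin ns) ℝ) * net2.Npiw).mulVec
                (ResNet.wvec σ net2 (C.mulVec b)))) i = _
      rw [Matrix.zero_mulVec, zero_add, Matrix.one_mul, Matrix.one_mul,
        ← Matrix.mulVec_mulVec (M := net2.Wskip), T21_action,
        ← ResNet.apply_eq]
      rfl

lemma rxi_action (a b : Fin ns → ℝ) :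
    ∃ ξ : (net1.NIdx ⊕ net2.NIdx) → ℝ,
      (Rxi2 net1 net2 (Matrix.fromCols 1 1) (Matrix.fromCols 0 C)).mulVec
        (Sum.elim (Sum.elim a b) (bigw C σ net1 net2 a b))
      = Sum.elim ξ (bigw C σ net1 net2 a b)
      ∧ ∀ i, bigw C σ net1 net2 a b i = σ (ξ i) := by
  refine ⟨(Nxix2 net1 net2 (Matrix.fromCols 1 1) (Matrix.fromCols 0 C)).mulVec
      (Sum.elim a b) + (Nxiw2 net1 net2).mulVec (bigw C σ net1 net2 a b), ?_, ?_⟩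
  · unfold Rxi2
    rw [Matrix.fromBlocks_mulVec]
    simp only [Sum.elim_comp_inl, Sum.elim_comp_inr]
    congr 1
    rw [Matrix.zero_mulVec, Matrix.one_mulVec, zero_add]
  · intro i
    cases i with
    | inl j =>
      have h1 : (Nxix2 net1 net2 (Matrix.fromCols 1 1)
          (Matrix.fromCols 0 C)).mulVec (Sum.elim a b) (Sum.inl j)
          = (net1.Nxix (Matrix.fromCols 1 1)).mulVec (Sum.elim a b) j := by
        unfold Nxix2; rw [Matrix.fromRows_mulVec]; rfl
      have h2 : (Nxiw2 net1 net2).mulVec (bigw C σ net1 net2 a b) (Sum.inl j)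
          = net1.Nxiw.mulVec (ResNet.wvec σ net1 (a + b)) j := by
        unfold Nxiw2 bigw
        rw [Matrix.fromBlocks_mulVec]
        simp only [Sum.elim_comp_inl, Sum.elim_comp_inr, Matrix.zero_mulVec, add_zero,
          Sum.elim_inl, Pi.add_apply, Pi.zero_apply]
      show ResNet.wvec σ net1 (a + b) j = _
      rw [Pi.add_apply, h1, h2]
      have := ResNet.wvec_consistent σ net1 (Matrix.fromCols 1 1) (Sum.elim a b) j
      rw [T11_action] at this
      exact this
    | inr j =>
      have h1 : (Nxix2 net1 net2 (Matrix.fromCols 1 1)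
          (Matrix.fromCols 0 C)).mulVec (Sum.elim a b) (Sum.inr j)
          = (net2.Nxix (Matrix.fromCols 0 C)).mulVec (Sum.elim a b) j := by
        unfold Nxix2; rw [Matrix.fromRows_mulVec]; rfl
      have h2 : (Nxiw2 net1 net2).mulVec (bigw C σ net1 net2 a b) (Sum.inr j)
          = net2.Nxiw.mulVec (ResNet.wvec σ net2 (C.mulVec b)) j := by
        unfold Nxiw2 bigw
        rw [Matrix.fromBlocks_mulVec]
        simp only [Sum.elim_comp_inl, Sum.elim_comp_inr, Matrix.zero_mulVec, zero_add,
          Sum.elim_inr, Pi.add_apply, Pi.zero_apply]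
      show ResNet.wvec σ net2 (C.mulVec b) j = _
      rw [Pi.add_apply, h1, h2]
      have := ResNet.wvec_consistent σ net2 (Matrix.fromCols 0 C) (Sum.elim a b) j
      rw [T21_action] at this
      exact this

end Key

lemma sum_sq_sum_elim {I J : Type*} [Fintype I] [Fintype J] (a : I → ℝ) (b : J → ℝ) :
    ∑ i, Sum.elim a b i ^ 2 = (∑ i, a i ^ 2) + ∑ j, b j ^ 2 := by
  rw [Fintype.sum_sum_type]
  simp

set_option maxHeartbeats 2000000 in
/-- Theorem 2: observer-based NN control of an LTI system.  With `K = 2` stacked networks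
(`π₁` the controller acting on `x̂`, `π₂` the observer correction acting on `C(x̂ - x)`),
`T₁¹ = [I, I]`, `T₁² = B`, `T₂¹ = [0, C]`, `T₂² = I` and `Â = diag(A, A)`, if the LMI has a
symmetric positive definite solution `P̂`, then the closed loop is neurally exponentially
observable and globally exponentially stable. -/
theorem neural_observer_controller_LTI
    {ns nu no : ℕ} (A : Matrix (Fin ns) (Fin ns) ℝ) (B : Matrix (Fin ns) (Fin nu) ℝ)
    (C : Matrix (Fin no) (Fin ns) ℝ)
    {σ : ℝ → ℝ} (hσ0 : σ 0 = 0)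
    (net1 : ResNet ns nu) (net2 : ResNet no ns)
    (α β : (net1.NIdx ⊕ net2.NIdx) → ℝ) (hαβ : ∀ i, α i ≤ β i)
    (hsec : ∀ i, SectorBounded σ (α i) (β i))
    (lam : (net1.NIdx ⊕ net2.NIdx) → ℝ) (hlam : ∀ i, 0 ≤ lam i)
    (Phat : Matrix (Fin ns ⊕ Fin ns) (Fin ns ⊕ Fin ns) ℝ) (hP : Phat.PosDef)
    (hLMI : Matrix.NegDef
      ((Rpi2 net1 net2 (Matrix.fromCols (1 : Matrix (Fin ns) (Fin ns) ℝ) 1) (Matrix.fromCols 0 C) B (1 : Matrix (Fin ns) (Fin ns) ℝ))ᵀ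
          * Matrix.fromBlocks
              ((Matrix.fromBlocks A 0 0 A)ᵀ * Phat + Phat * Matrix.fromBlocks A 0 0 A)
              Phat Phat 0
          * Rpi2 net1 net2 (Matrix.fromCols (1 : Matrix (Fin ns) (Fin ns) ℝ) 1) (Matrix.fromCols 0 C) B (1 : Matrix (Fin ns) (Fin ns) ℝ)
        + (Rxi2 net1 net2 (Matrix.fromCols (1 : Matrix (Fin ns) (Fin ns) ℝ) 1) (Matrix.fromCols 0 C))ᵀ
          * (Psi α β)ᵀ * Mmat lam * Psi α β
          * Rxi2 net1 net2 (Matrix.fromCols (1 : Matrix (Fin ns) (Fin ns) ℝ) 1) (Matrix.fromCols 0 C))) :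
    ∃ M : ℝ, 0 < M ∧ ∃ κ : ℝ, 0 < κ ∧
      ∀ x xh : ℝ → Fin ns → ℝ,
        (∀ t : ℝ, 0 ≤ t →
          HasDerivAt x (A.mulVec (x t) + B.mulVec (net1.apply σ (xh t))) t) →
        (∀ t : ℝ, 0 ≤ t →
          HasDerivAt xh (A.mulVec (xh t) + B.mulVec (net1.apply σ (xh t))
            + net2.apply σ (C.mulVec (xh t - x t))) t) →
        ∀ t : ℝ, 0 ≤ t →
          norm2 (x t) + norm2 (x t - xh t)
            ≤ M * Real.exp (-κ * t) * (norm2 (x 0) + norm2 (xh 0)) := by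
  classical
  rcases Nat.eq_zero_or_pos ns with hns0 | hns0
  · subst hns0
    refine ⟨1, one_pos, 1, one_pos, fun x xh _ _ t ht => ?_⟩
    have hz : ∀ v : Fin 0 → ℝ, norm2 v = 0 := fun v => by simp [norm2]
    rw [hz, hz, hz, hz]
    simp
  haveI hne : Nonempty (Fin ns) := ⟨⟨0, hns0⟩⟩
  set SM := ((Rpi2 net1 net2 (Matrix.fromCols (1 : Matrix (Fin ns) (Fin ns) ℝ) 1) (Matrix.fromCols 0 C) B (1 : Matrix (Fin ns) (Fin ns) ℝ))ᵀ
          * Matrix.fromBlocks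
              ((Matrix.fromBlocks A 0 0 A)ᵀ * Phat + Phat * Matrix.fromBlocks A 0 0 A)
              Phat Phat 0
          * Rpi2 net1 net2 (Matrix.fromCols (1 : Matrix (Fin ns) (Fin ns) ℝ) 1) (Matrix.fromCols 0 C) B (1 : Matrix (Fin ns) (Fin ns) ℝ)
        + (Rxi2 net1 net2 (Matrix.fromCols (1 : Matrix (Fin ns) (Fin ns) ℝ) 1) (Matrix.fromCols 0 C))ᵀ
          * (Psi α β)ᵀ * Mmat lam * Psi α β
          * Rxi2 net1 net2 (Matrix.fromCols (1 : Matrix (Fin ns) (Fin ns) ℝ) 1) (Matrix.fromCols 0 C)) with hSMdef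
  obtain ⟨aS, bS, -, ⟨v0, hv00, hv0b⟩, hSbd⟩ := exists_quad_bounds SM
  have hbS : bS < 0 := by
    have h := hLMI v0 hv00
    rw [hv0b] at h
    have hpos := sum_sq_pos_of_ne_zero hv00
    nlinarith
  obtain ⟨aP, bP, ⟨u0, hu00, hu0a⟩, -, hPbd⟩ := exists_quad_bounds Phat
  have haP : 0 < aP := by
    have h := hP.dotProduct_mulVec_pos hu00
    have hstar : star u0 = u0 := by funext i; simp
    rw [hstar, hu0a] at h
    have hpos := sum_sq_pos_of_ne_zero hu00
    nlinarith
  have hbP : 0 < bP := by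
    have h := (hPbd u0).2
    rw [hu0a] at h
    have hpos := sum_sq_pos_of_ne_zero hu00
    nlinarith
  set κ' : ℝ := -bS / bP with hκ'def
  have hκ' : 0 < κ' := div_pos (by linarith) hbP
  have hbSκ : bS = -κ' * bP := by rw [hκ'def, neg_div, neg_neg, div_mul_cancel₀ _ hbP.ne']
  have hsqp : 0 < Real.sqrt (bP / aP) := Real.sqrt_pos.mpr (div_pos hbP haP)
  refine ⟨4 * Real.sqrt (bP / aP), by linarith, κ' / 2, by linarith, ?_⟩
  intro x xh hx hxh
  set X : ℝ → (Fin ns ⊕ Fin ns) → ℝ := fun t => Sum.elim (x t) (xh t - x t) with hXdef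
  set wt : ℝ → (net1.NIdx ⊕ net2.NIdx) → ℝ :=
    fun t => bigw C σ net1 net2 (x t) (xh t - x t) with hwdef
  set zt : ℝ → ((Fin ns ⊕ Fin ns) ⊕ (net1.NIdx ⊕ net2.NIdx)) → ℝ :=
    fun t => Sum.elim (X t) (wt t) with hzdef
  set ut : ℝ → (Fin ns ⊕ Fin ns) → ℝ := fun t =>
    Sum.elim (B.mulVec (net1.apply σ (x t + (xh t - x t))))
      (net2.apply σ (C.mulVec (xh t - x t))) with hutdef
  set D : ℝ → (Fin ns ⊕ Fin ns) → ℝ :=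
    fun t => (Matrix.fromBlocks A 0 0 A).mulVec (X t) + ut t with hDdef
  set V : ℝ → ℝ := fun t => X t ⬝ᵥ Phat.mulVec (X t) with hVdef
  have hsum : ∀ s : ℝ, x s + (xh s - x s) = xh s := by
    intro s; funext j; simp
  have hXder : ∀ t : ℝ, 0 ≤ t → HasDerivAt X (D t) t := by
    intro t ht
    have h1 := hx t ht
    have h2 := hxh t ht
    rw [hasDerivAt_pi]
    intro i
    have hD : D t = Sum.elim
        (A.mulVec (x t) + B.mulVec (net1.apply σ (xh t)))
        (A.mulVec (xh t - x t) + net2.apply σ (C.mulVec (xh t - x t))) := by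
      rw [hDdef, hXdef, hutdef]
      simp only [Matrix.fromBlocks_mulVec, Matrix.zero_mulVec, add_zero, zero_add,
        Sum.elim_comp_inl, Sum.elim_comp_inr, hsum]
      funext i
      cases i with
      | inl i => simp
      | inr i => simp
    cases i with
    | inl i =>
      have := hasDerivAt_pi.1 h1 i
      rw [hD]
      exact this
    | inr i =>
      have h3 := (hasDerivAt_pi.1 h2 i).sub (hasDerivAt_pi.1 h1 i)
      rw [hD]
      show HasDerivAt (fun s => xh s i - x s i) _ t
      refine (h3 : HasDerivAt (fun s => xh s i - x s i) _ t).congr_deriv ?_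
      simp only [Sum.elim_inr, Pi.add_apply, Matrix.mulVec_sub, Pi.sub_apply]
      ring
  have hVder : ∀ t : ℝ, 0 ≤ t →
      HasDerivAt V (D t ⬝ᵥ Phat.mulVec (X t) + X t ⬝ᵥ Phat.mulVec (D t)) t := by
    intro t ht
    have hXi : ∀ i, HasDerivAt (fun s => X s i) (D t i) t :=
      fun i => hasDerivAt_pi.1 (hXder t ht) i
    have hmain : HasDerivAt (fun s => ∑ i, X s i * ∑ j, Phat i j * X s j)
        (∑ i, (D t i * ∑ j, Phat i j * X t j + X t i * ∑ j, Phat i j * D t j)) t := by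
      apply HasDerivAt.fun_sum
      intro i _
      exact (hXi i).mul (HasDerivAt.fun_sum (fun j _ => (hXi j).const_mul (Phat i j)))
    have heqf : V = fun s => ∑ i, X s i * ∑ j, Phat i j * X s j := by
      funext s
      rw [hVdef]
      rfl
    have heqd : D t ⬝ᵥ Phat.mulVec (X t) + X t ⬝ᵥ Phat.mulVec (D t)
        = ∑ i, (D t i * ∑ j, Phat i j * X t j + X t i * ∑ j, Phat i j * D t j) := by
      rw [Finset.sum_add_distrib]
      rfl
    rw [heqf, heqd]
    exact hmain
  -- pointwise decrease of the Lyapunov function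
  have hkey : ∀ t : ℝ,
      D t ⬝ᵥ Phat.mulVec (X t) + X t ⬝ᵥ Phat.mulVec (D t) ≤ -κ' * V t := by
    intro t
    have hu : (Rpi2 net1 net2 (Matrix.fromCols 1 1 : Matrix (Fin ns) (Fin ns ⊕ Fin ns) ℝ) (Matrix.fromCols 0 C) B (1 : Matrix (Fin ns) (Fin ns) ℝ)).mulVec
        (zt t) = Sum.elim (X t) (ut t) :=
      rpi_action B C σ net1 net2 (x t) (xh t - x t)
    obtain ⟨ξ, hξ, hwσ⟩ := rxi_action C σ net1 net2 (x t) (xh t - x t)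
    have hsector : 0 ≤ zt t ⬝ᵥ
        ((Rxi2 net1 net2 (Matrix.fromCols 1 1 : Matrix (Fin ns) (Fin ns ⊕ Fin ns) ℝ) (Matrix.fromCols 0 C))ᵀ
          * (Psi α β)ᵀ * Mmat lam * Psi α β
          * Rxi2 net1 net2 (Matrix.fromCols 1 1 : Matrix (Fin ns) (Fin ns ⊕ Fin ns) ℝ) (Matrix.fromCols 0 C)).mulVec (zt t) := by
      have hassoc : (Rxi2 net1 net2
            (Matrix.fromCols 1 1 : Matrix (Fin ns) (Fin ns ⊕ Fin ns) ℝ)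
            (Matrix.fromCols 0 C))ᵀ
          * (Psi α β)ᵀ * Mmat lam * Psi α β
          * Rxi2 net1 net2 (Matrix.fromCols 1 1 : Matrix (Fin ns) (Fin ns ⊕ Fin ns) ℝ) (Matrix.fromCols 0 C)
          = (Rxi2 net1 net2
              (Matrix.fromCols 1 1 : Matrix (Fin ns) (Fin ns ⊕ Fin ns) ℝ)
              (Matrix.fromCols 0 C))ᵀ
            * ((Psi α β)ᵀ * Mmat lam * Psi α β)
            * Rxi2 net1 net2 (Matrix.fromCols 1 1 : Matrix (Fin ns) (Fin ns ⊕ Fin ns) ℝ) (Matrix.fromCols 0 C) := by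
        simp only [Matrix.mul_assoc]
      rw [hassoc, dot_conj, hzdef]
      show 0 ≤ (Rxi2 net1 net2 _ _).mulVec (Sum.elim (X t) (wt t)) ⬝ᵥ _
      rw [hwdef, hξ]
      exact psi_quad α β lam hlam hsec ξ _ hwσ
    have hQpart : zt t ⬝ᵥ
        ((Rpi2 net1 net2 (Matrix.fromCols 1 1 : Matrix (Fin ns) (Fin ns ⊕ Fin ns) ℝ) (Matrix.fromCols 0 C) B (1 : Matrix (Fin ns) (Fin ns) ℝ))ᵀ
          * Matrix.fromBlocks
              ((Matrix.fromBlocks A 0 0 A)ᵀ * Phat + Phat * Matrix.fromBlocks A 0 0 A)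
              Phat Phat 0
          * Rpi2 net1 net2 (Matrix.fromCols 1 1 : Matrix (Fin ns) (Fin ns ⊕ Fin ns) ℝ) (Matrix.fromCols 0 C) B (1 : Matrix (Fin ns) (Fin ns) ℝ)).mulVec (zt t)
        = D t ⬝ᵥ Phat.mulVec (X t) + X t ⬝ᵥ Phat.mulVec (D t) := by
      rw [dot_conj, hu, Matrix.fromBlocks_mulVec]
      simp only [Sum.elim_comp_inl, Sum.elim_comp_inr, Matrix.zero_mulVec, add_zero]
      rw [sumElim_dotProduct_sumElim, hDdef]
      simp only [Matrix.add_mulVec, Matrix.mulVec_add, dotProduct_add,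
        add_dotProduct]
      rw [← Matrix.mulVec_mulVec (M := (Matrix.fromBlocks A 0 0 A)ᵀ),
        Matrix.dotProduct_mulVec (X t) ((Matrix.fromBlocks A 0 0 A)ᵀ),
        Matrix.vecMul_transpose,
        ← Matrix.mulVec_mulVec (M := Phat) (N := Matrix.fromBlocks A 0 0 A)]
      ring
    have hSMz := (hSbd (zt t)).2
    have hsplit : zt t ⬝ᵥ SM.mulVec (zt t)
        = D t ⬝ᵥ Phat.mulVec (X t) + X t ⬝ᵥ Phat.mulVec (D t)
          + zt t ⬝ᵥ
          ((Rxi2 net1 net2 (Matrix.fromCols 1 1 : Matrix (Fin ns) (Fin ns ⊕ Fin ns) ℝ) (Matrix.fromCols 0 C))ᵀ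
            * (Psi α β)ᵀ * Mmat lam * Psi α β
            * Rxi2 net1 net2 (Matrix.fromCols 1 1 : Matrix (Fin ns) (Fin ns ⊕ Fin ns) ℝ) (Matrix.fromCols 0 C)).mulVec (zt t) := by
      rw [hSMdef, Matrix.add_mulVec, dotProduct_add, hQpart]
    have hzX : ∑ i, X t i ^ 2 ≤ ∑ i, zt t i ^ 2 := by
      rw [hzdef]
      show (∑ i, X t i ^ 2) ≤ ∑ i : (Fin ns ⊕ Fin ns) ⊕ (net1.NIdx ⊕ net2.NIdx),
        Sum.elim (X t) (wt t) i ^ 2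
      conv_rhs => rw [Fintype.sum_sum_type]
      have h0 : (0:ℝ) ≤ ∑ i : net1.NIdx ⊕ net2.NIdx, wt t i ^ 2 :=
        Finset.sum_nonneg fun i _ => sq_nonneg _
      exact le_add_of_nonneg_right h0
    have hVub : V t ≤ bP * ∑ i, X t i ^ 2 := (hPbd (X t)).2
    have h1 : D t ⬝ᵥ Phat.mulVec (X t) + X t ⬝ᵥ Phat.mulVec (D t)
        ≤ bS * ∑ i, zt t i ^ 2 := by
      have := hsplit ▸ hSMz
      linarith [hsector, this]
    have h2 : bS * ∑ i, zt t i ^ 2 ≤ bS * ∑ i, X t i ^ 2 := by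
      nlinarith
    have h3 : bS * ∑ i, X t i ^ 2 ≤ -κ' * V t := by
      rw [hbSκ]
      nlinarith
    linarith
  -- Gronwall argument
  have hVcont : ContinuousOn V (Set.Ici 0) := fun t ht =>
    ((hVder t ht).continuousAt).continuousWithinAt
  set g : ℝ → ℝ := fun t => V t * Real.exp (κ' * t) with hgdef
  have hgder : ∀ t : ℝ, 0 ≤ t → HasDerivAt g
      ((D t ⬝ᵥ Phat.mulVec (X t) + X t ⬝ᵥ Phat.mulVec (D t)) * Real.exp (κ' * t)
        + V t * (κ' * Real.exp (κ' * t))) t := by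
    intro t ht
    have h1 : HasDerivAt (fun s : ℝ => κ' * s) κ' t := by
      simpa using (hasDerivAt_id t).const_mul κ'
    have he : HasDerivAt (fun s => Real.exp (κ' * s)) (κ' * Real.exp (κ' * t)) t := by
      simpa [mul_comm] using h1.exp
    exact (hVder t ht).mul he
  have hganti : AntitoneOn g (Set.Ici 0) := by
    apply antitoneOn_of_deriv_nonpos (convex_Ici 0)
    · exact hVcont.mul
        ((Real.continuous_exp.comp (continuous_const.mul continuous_id)).continuousOn)
    · intro t ht
      rw [interior_Ici] at ht
      exact ((hgder t (le_of_lt ht)).differentiableAt).differentiableWithinAt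
    · intro t ht
      rw [interior_Ici] at ht
      rw [(hgder t ht.le).deriv]
      nlinarith [hkey t, Real.exp_pos (κ' * t)]
  intro t ht
  have hg : g t ≤ g 0 := hganti Set.self_mem_Ici ht ht
  have hVt : V t ≤ V 0 * Real.exp (-κ' * t) := by
    have h0 : g 0 = V 0 := by simp [hgdef]
    have h1 : g t ≤ V 0 := h0 ▸ hg
    have h2 : g t * Real.exp (-κ' * t) = V t := by
      rw [hgdef]
      show V t * Real.exp (κ' * t) * Real.exp (-κ' * t) = V t
      rw [mul_assoc, ← Real.exp_add, show κ' * t + -κ' * t = 0 by ring, Real.exp_zero, mul_one]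
    rw [← h2]
    have := Real.exp_pos (-κ' * t)
    nlinarith
  have hlb : aP * ∑ i, X t i ^ 2 ≤ V t := (hPbd (X t)).1
  have hub0 : V 0 ≤ bP * ∑ i, X 0 i ^ 2 := (hPbd (X 0)).2
  have hS0 : (0:ℝ) ≤ ∑ i, X 0 i ^ 2 := Finset.sum_nonneg fun i _ => sq_nonneg _
  have hexp : 0 < Real.exp (-κ' * t) := Real.exp_pos _
  have hXsq : ∑ i, X t i ^ 2 ≤ bP / aP * Real.exp (-κ' * t) * ∑ i, X 0 i ^ 2 := by
    rw [div_mul_eq_mul_div, div_mul_eq_mul_div, le_div_iff₀ haP]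
    nlinarith [mul_le_mul_of_nonneg_right hub0 hexp.le]
  have hstep : Real.sqrt (∑ i, X t i ^ 2)
      ≤ Real.sqrt (bP / aP) * (Real.exp (-(κ' / 2) * t) * Real.sqrt (∑ i, X 0 i ^ 2)) := by
    have h := Real.sqrt_le_sqrt hXsq
    have hE2 : Real.exp (-κ' * t) = Real.exp (-(κ' / 2) * t) ^ 2 := by
      rw [sq, ← Real.exp_add]
      congr 1
      ring
    rw [hE2] at h
    rw [Real.sqrt_mul (mul_nonneg (div_nonneg hbP.le haP.le) (sq_nonneg _))
      (∑ i, X 0 i ^ 2)] at h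
    rw [Real.sqrt_mul (div_nonneg hbP.le haP.le) (Real.exp (-(κ' / 2) * t) ^ 2)] at h
    rw [Real.sqrt_sq (Real.exp_nonneg _)] at h
    exact h.trans_eq (by ring)
  have hx1 : norm2 (x t) ≤ Real.sqrt (∑ i, X t i ^ 2) := by
    rw [norm2]
    apply Real.sqrt_le_sqrt
    simp only [hXdef]
    rw [sum_sq_sum_elim]
    have h0 : (0:ℝ) ≤ ∑ i, (xh t - x t) i ^ 2 := Finset.sum_nonneg fun i _ => sq_nonneg _
    linarith
  have hx2 : norm2 (x t - xh t) ≤ Real.sqrt (∑ i, X t i ^ 2) := by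
    have hneg : x t - xh t = -(xh t - x t) := (neg_sub _ _).symm
    rw [hneg, norm2_neg, norm2]
    apply Real.sqrt_le_sqrt
    simp only [hXdef]
    rw [sum_sq_sum_elim]
    have h0 : (0:ℝ) ≤ ∑ i, x t i ^ 2 := Finset.sum_nonneg fun i _ => sq_nonneg _
    linarith
  have hX0 : Real.sqrt (∑ i, X 0 i ^ 2) ≤ 2 * norm2 (x 0) + norm2 (xh 0) := by
    simp only [hXdef]
    rw [sum_sq_sum_elim]
    have h1 : Real.sqrt ((∑ i, x 0 i ^ 2) + ∑ i, (xh 0 - x 0) i ^ 2)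
        ≤ norm2 (x 0) + norm2 (xh 0 - x 0) := by
      rw [norm2, norm2]
      exact sqrt_add_le' _ _ (Finset.sum_nonneg fun i _ => sq_nonneg _)
        (Finset.sum_nonneg fun i _ => sq_nonneg _)
    have h2 : norm2 (xh 0 - x 0) ≤ norm2 (xh 0) + norm2 (x 0) := by
      rw [sub_eq_add_neg]
      exact (norm2_add_le _ _).trans (by rw [norm2_neg])
    linarith
  have hE0 : 0 ≤ Real.exp (-(κ' / 2) * t) := Real.exp_nonneg _
  have hsA : 0 ≤ Real.sqrt (bP / aP) := Real.sqrt_nonneg _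
  have hn1 : 0 ≤ norm2 (x 0) := norm2_nonneg _
  have hn2 : 0 ≤ norm2 (xh 0) := norm2_nonneg _
  calc norm2 (x t) + norm2 (x t - xh t)
      ≤ 2 * Real.sqrt (∑ i, X t i ^ 2) := by linarith
    _ ≤ 2 * (Real.sqrt (bP / aP) * (Real.exp (-(κ' / 2) * t)
          * Real.sqrt (∑ i, X 0 i ^ 2))) := by linarith
    _ ≤ 2 * (Real.sqrt (bP / aP) * (Real.exp (-(κ' / 2) * t)
          * (2 * norm2 (x 0) + norm2 (xh 0)))) := by
        have := mul_le_mul_of_nonneg_left hX0 hE0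
        have := mul_le_mul_of_nonneg_left this hsA
        linarith
    _ ≤ 4 * Real.sqrt (bP / aP) * Real.exp (-(κ' / 2) * t)
          * (norm2 (x 0) + norm2 (xh 0)) := by
        have h5 : 2 * norm2 (x 0) + norm2 (xh 0)
            ≤ 2 * (norm2 (x 0) + norm2 (xh 0)) := by linarith
        have h6 := mul_le_mul_of_nonneg_left h5 hE0
        have h7 := mul_le_mul_of_nonneg_left h6 hsA
        nlinarith [h7]
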